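/- For rational numbers $a=\frac{1}{6}$, $b=\frac{5}{6}$ and a rational $q=\frac{m}{n}$ in lowest terms with $0<q<1$ and $q\notin\{a,b\}$, the condition $\{sq\}+\{s(a-q)\}+\{s(b-q)\}+\{s(q-a-b)\}=2$ for all integers $s$ coprime to $\mathrm{lcm}(6,n)$ holds if and only if $q\in\{\frac{1}{2},\frac{1}{3},\frac{2}{3},\frac{1}{4},\frac{2}{4},\frac{3}{4},\frac{1}{5},\frac{2}{5},\frac{3}{5},\frac{4}{5}\}$. -/

import Mathlib

private lemma fract_cast_mul (s : ℤ) (x : ℚ) :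
    Int.fract ((s : ℝ) * (x : ℝ)) = ((Int.fract ((s : ℚ) * x) : ℚ) : ℝ) := by
  rw [show (s : ℝ) * (x : ℝ) = (((s : ℚ) * x : ℚ) : ℝ) by push_cast; ring]
  exact (Rat.cast_fract _).symm

private lemma sum_cast (s : ℤ) (x y z w : ℚ) :
    Int.fract ((s : ℝ) * (x : ℝ)) + Int.fract ((s : ℝ) * (y : ℝ))
      + Int.fract ((s : ℝ) * (z : ℝ)) + Int.fract ((s : ℝ) * (w : ℝ)) = 2 ↔
    Int.fract ((s : ℚ) * x) + Int.fract ((s : ℚ) * y)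
      + Int.fract ((s : ℚ) * z) + Int.fract ((s : ℚ) * w) = 2 := by
  rw [fract_cast_mul, fract_cast_mul, fract_cast_mul, fract_cast_mul]
  constructor <;> intro h <;> exact_mod_cast h

private lemma gcd_emod (s L : ℤ) (h : Int.gcd s L = 1) : Int.gcd (s % L) L = 1 := by
  rw [← Int.isCoprime_iff_gcd_eq_one] at h ⊢
  have hrw : s % L = s + L * (-(s / L)) := by rw [mul_neg, ← sub_eq_add_neg, Int.emod_def]
  rw [hrw]
  exact h.add_mul_left_left _

private lemma fract_emod (s L : ℤ) (c : ℚ) (k : ℤ) (hk : (L : ℚ) * c = k) :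
    Int.fract ((s : ℚ) * c) = Int.fract (((s % L : ℤ) : ℚ) * c) := by
  have hs : (s : ℚ) = (L : ℚ) * ((s / L : ℤ) : ℚ) + ((s % L : ℤ) : ℚ) := by
    exact_mod_cast (congrArg (fun z : ℤ => (z : ℚ)) (Int.mul_ediv_add_emod s L)).symm
  have hsplit : (s : ℚ) * c = ((s % L : ℤ) : ℚ) * c + ((s / L * k : ℤ) : ℚ) := by
    push_cast
    push_cast at hs
    linear_combination c * hs + ((s / L : ℤ) : ℚ) * hk
  rw [hsplit, Int.fract_add_intCast]

private lemma case_lemma (x : ℚ) (L : ℤ) (hL : 0 < L) (k1 k2 k3 k4 : ℤ)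
    (hk1 : (L : ℚ) * x = k1) (hk2 : (L : ℚ) * (1/6 - x) = k2)
    (hk3 : (L : ℚ) * (5/6 - x) = k3) (hk4 : (L : ℚ) * (x - 1/6 - 5/6) = k4)
    (hcheck : ∀ r : ℤ, 0 ≤ r → r < L → Int.gcd r L = 1 →
      Int.fract ((r : ℚ) * x) + Int.fract ((r : ℚ) * (1/6 - x))
        + Int.fract ((r : ℚ) * (5/6 - x)) + Int.fract ((r : ℚ) * (x - 1/6 - 5/6)) = 2)
    (s : ℤ) (hs : Int.gcd s L = 1) :
    Int.fract ((s : ℝ) * (x : ℝ)) + Int.fract ((s : ℝ) * ((1/6 - x : ℚ) : ℝ))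
      + Int.fract ((s : ℝ) * ((5/6 - x : ℚ) : ℝ))
      + Int.fract ((s : ℝ) * ((x - 1/6 - 5/6 : ℚ) : ℝ)) = 2 := by
  rw [sum_cast]
  rw [fract_emod s L _ k1 hk1, fract_emod s L _ k2 hk2, fract_emod s L _ k3 hk3,
    fract_emod s L _ k4 hk4]
  exact hcheck _ (Int.emod_nonneg s (by omega)) (Int.emod_lt_of_pos s hL) (gcd_emod s L hs)

set_option maxHeartbeats 2000000 in
theorem stmt7 (a b q : ℚ) (ha : a = 1/6) (hb : b = 5/6)
    (h0 : 0 < q) (h1 : q < 1) (hqa : q ≠ a) (hqb : q ≠ b) :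
    (∀ s : ℤ, Int.gcd s (Nat.lcm 6 q.den) = 1 →
        Int.fract ((s : ℝ) * (q : ℝ)) + Int.fract ((s : ℝ) * ((a - q : ℚ) : ℝ))
          + Int.fract ((s : ℝ) * ((b - q : ℚ) : ℝ))
          + Int.fract ((s : ℝ) * ((q - a - b : ℚ) : ℝ)) = 2)
      ↔ q ∈ ({1/2, 1/3, 2/3, 1/4, 2/4, 3/4, 1/5, 2/5, 3/5, 4/5} : Set ℚ) := by
  subst ha hb
  have hnum : 0 < q.num := Rat.num_pos.mpr h0
  have hlt : q.num < (q.den : ℤ) := by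
    exact_mod_cast Rat.num_lt_denom_iff.mpr h1
  constructor
  · intro h
    have hQ : ∀ s : ℤ, Int.gcd s (Nat.lcm 6 q.den) = 1 →
        Int.fract ((s : ℚ) * q) + Int.fract ((s : ℚ) * (1/6 - q))
          + Int.fract ((s : ℚ) * (5/6 - q)) + Int.fract ((s : ℚ) * (q - 1/6 - 5/6)) = 2 :=
      fun s hs => (sum_cast s q (1/6 - q) (5/6 - q) (q - 1/6 - 5/6)).mp (h s hs)
    -- rule out den = 6
    have hd6 : q.den ≠ 6 := by
      intro h6
      have hc := q.reduced
      rw [h6] at hc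
      have hb6 : q.num < 6 := by omega
      have hq16 : q = (q.num : ℚ) / 6 := by
        conv_lhs => rw [← Rat.num_div_den q, h6]
        norm_num
      have : q.num = 1 ∨ q.num = 2 ∨ q.num = 3 ∨ q.num = 4 ∨ q.num = 5 := by omega
      rcases this with h'|h'|h'|h'|h'
      · exact hqa (by rw [hq16, h']; norm_num)
      · rw [show q.num.natAbs = 2 by omega] at hc; norm_num [Nat.Coprime] at hc
      · rw [show q.num.natAbs = 3 by omega] at hc; norm_num [Nat.Coprime] at hc
      · rw [show q.num.natAbs = 4 by omega] at hc; norm_num [Nat.Coprime] at hc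
      · exact hqb (by rw [hq16, h']; norm_num)
    -- rule out den ≥ 7
    have hd7 : q.den ≤ 6 := by
      by_contra hge
      push_neg at hge
      set n := q.den with hn
      have hn0 : (n : ℚ) ≠ 0 := by positivity
      have hL : NeZero (Nat.lcm 6 n) := ⟨Nat.lcm_ne_zero (by norm_num) (by omega)⟩
      have hdvd : n ∣ Nat.lcm 6 n := Nat.dvd_lcm_right 6 n
      have h6dvd : 6 ∣ Nat.lcm 6 n := Nat.dvd_lcm_left 6 n
      have habs : ((q.num.natAbs : ℤ) : ZMod n) = (q.num : ZMod n) := by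
        rw [Int.natAbs_of_nonneg hnum.le]
      have hu : IsUnit ((q.num : ZMod n)) := by
        have hcop := (ZMod.isUnit_iff_coprime q.num.natAbs n).mpr q.reduced
        rwa [show ((q.num.natAbs : ℕ) : ZMod n) = (q.num : ZMod n) by
          rw [← Int.cast_natCast, habs]] at hcop
      obtain ⟨w, hw⟩ := ZMod.unitsMap_surjective hdvd hu.unit⁻¹
      set s : ℤ := (((w : ZMod (Nat.lcm 6 n)).val : ℕ) : ℤ) with hs
      have hgcd : Int.gcd s (Nat.lcm 6 n) = 1 := by
        have := ZMod.val_coe_unit_coprime w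
        rw [hs]
        exact_mod_cast this
      -- s * q.num ≡ 1 mod n
      have hcast : ((s : ZMod n)) = ((hu.unit⁻¹ : (ZMod n)ˣ) : ZMod n) := by
        rw [hs]
        push_cast
        rw [ZMod.natCast_val, ← ZMod.castHom_apply (h := hdvd)]
        rw [← hw]
        rfl
      have hmul : (s : ZMod n) * (q.num : ZMod n) = 1 := by
        rw [hcast]
        exact Units.inv_mul_of_eq hu.unit_spec
      have hdvd1 : (n : ℤ) ∣ s * q.num - 1 := by
        apply (ZMod.intCast_zmod_eq_zero_iff_dvd (s * q.num - 1) n).mp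
        push_cast
        rw [hmul]
        ring
      obtain ⟨t, ht⟩ := hdvd1
      have ht' : s * q.num = 1 + n * t := by linarith [ht]
      -- s coprime to 6, so s % 6 ∈ {1, 5}
      have hg6 : Int.gcd s 6 = 1 := by
        have h2 : IsCoprime s ((Nat.lcm 6 n : ℕ) : ℤ) := Int.isCoprime_iff_gcd_eq_one.mpr hgcd
        have h3 : ((6:ℕ) : ℤ) ∣ ((Nat.lcm 6 n : ℕ) : ℤ) := by exact_mod_cast h6dvd
        have := IsCoprime.of_isCoprime_of_dvd_right h2 h3
        exact_mod_cast Int.isCoprime_iff_gcd_eq_one.mp this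
      have hr6 : s % 6 = 1 ∨ s % 6 = 5 := by
        have hnd2 : ¬ (2:ℤ) ∣ s := by
          intro hd
          have := Int.dvd_gcd hd (by norm_num : (2:ℤ) ∣ 6)
          rw [hg6] at this
          norm_num at this
        have hnd3 : ¬ (3:ℤ) ∣ s := by
          intro hd
          have := Int.dvd_gcd hd (by norm_num : (3:ℤ) ∣ 6)
          rw [hg6] at this
          norm_num at this
        omega
      set k : ℤ := s / 6 with hk
      have hs6 : (s : ℚ) = 6 * (k : ℚ) + ((s % 6 : ℤ) : ℚ) := by
        exact_mod_cast (congrArg (fun z : ℤ => (z : ℚ)) (Int.mul_ediv_add_emod s 6)).symm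
      have e1 : (s : ℚ) * q = 1 / (n : ℚ) + ((t : ℤ) : ℚ) := by
        have hnum_eq : ((s * q.num : ℤ) : ℚ) = ((1 + (n : ℤ) * t : ℤ) : ℚ) := by
          exact_mod_cast congrArg (fun z : ℤ => (z : ℚ)) ht'
        push_cast at hnum_eq
        have hqval : q = (q.num : ℚ) / (n : ℚ) := by rw [hn, Rat.num_div_den]
        rw [hqval]
        field_simp
        linarith [hnum_eq]
      have hn7 : (7 : ℚ) ≤ (n : ℚ) := by exact_mod_cast hge
      have hinv : 0 < 1 / (n : ℚ) ∧ 1 / (n : ℚ) ≤ 1 / 7 := by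
        constructor
        · positivity
        · apply one_div_le_one_div_of_le <;> norm_num <;> linarith
      have f1 : Int.fract ((s : ℚ) * q) = 1 / (n : ℚ) := by
        rw [e1, Int.fract_add_intCast, Int.fract_eq_self.mpr ⟨hinv.1.le, by linarith [hinv.2]⟩]
      have f4 : Int.fract ((s : ℚ) * (q - 1/6 - 5/6)) = 1 / (n : ℚ) := by
        have e4 : (s : ℚ) * (q - 1/6 - 5/6) = 1 / (n : ℚ) + ((t - s : ℤ) : ℚ) := by
          push_cast
          linear_combination e1
        rw [e4, Int.fract_add_intCast, Int.fract_eq_self.mpr ⟨hinv.1.le, by linarith [hinv.2]⟩]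
      rcases hr6 with hr|hr
      · have e2 : (s : ℚ) * (1/6 - q) = (1/6 - 1 / (n : ℚ)) + ((k - t : ℤ) : ℚ) := by
          rw [hr] at hs6; push_cast at hs6
          push_cast
          linear_combination (1/6 : ℚ) * hs6 - e1
        have e3 : (s : ℚ) * (5/6 - q) = (5/6 - 1 / (n : ℚ)) + ((5 * k - t : ℤ) : ℚ) := by
          rw [hr] at hs6; push_cast at hs6
          push_cast
          linear_combination (5/6 : ℚ) * hs6 - e1
        have f2 : Int.fract ((s : ℚ) * (1/6 - q)) = 1/6 - 1 / (n : ℚ) := by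
          rw [e2, Int.fract_add_intCast,
            Int.fract_eq_self.mpr ⟨by linarith [hinv.2], by linarith [hinv.1]⟩]
        have f3 : Int.fract ((s : ℚ) * (5/6 - q)) = 5/6 - 1 / (n : ℚ) := by
          rw [e3, Int.fract_add_intCast,
            Int.fract_eq_self.mpr ⟨by linarith [hinv.2], by linarith [hinv.1]⟩]
        have := hQ s hgcd
        rw [f1, f2, f3, f4] at this
        linarith [this]
      · have e2 : (s : ℚ) * (1/6 - q) = (5/6 - 1 / (n : ℚ)) + ((k - t : ℤ) : ℚ) := by
          rw [hr] at hs6; push_cast at hs6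
          push_cast
          linear_combination (1/6 : ℚ) * hs6 - e1
        have e3 : (s : ℚ) * (5/6 - q) = (1/6 - 1 / (n : ℚ)) + ((5 * k - t + 4 : ℤ) : ℚ) := by
          rw [hr] at hs6; push_cast at hs6
          push_cast
          linear_combination (5/6 : ℚ) * hs6 - e1
        have f2 : Int.fract ((s : ℚ) * (1/6 - q)) = 5/6 - 1 / (n : ℚ) := by
          rw [e2, Int.fract_add_intCast,
            Int.fract_eq_self.mpr ⟨by linarith [hinv.2], by linarith [hinv.1]⟩]
        have f3 : Int.fract ((s : ℚ) * (5/6 - q)) = 1/6 - 1 / (n : ℚ) := by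
          rw [e3, Int.fract_add_intCast,
            Int.fract_eq_self.mpr ⟨by linarith [hinv.2], by linarith [hinv.1]⟩]
        have := hQ s hgcd
        rw [f1, f2, f3, f4] at this
        linarith [this]
    -- enumerate
    have hcases : (q.den = 2 ∧ q.num = 1) ∨ (q.den = 3 ∧ q.num = 1) ∨ (q.den = 3 ∧ q.num = 2)
        ∨ (q.den = 4 ∧ q.num = 1) ∨ (q.den = 4 ∧ q.num = 2) ∨ (q.den = 4 ∧ q.num = 3)
        ∨ (q.den = 5 ∧ q.num = 1) ∨ (q.den = 5 ∧ q.num = 2) ∨ (q.den = 5 ∧ q.num = 3)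
        ∨ (q.den = 5 ∧ q.num = 4) := by omega
    have hval : ∀ (d : ℕ) (m : ℤ), q.den = d → q.num = m → q = (m : ℚ) / (d : ℚ) := by
      intro d m hd hm
      conv_lhs => rw [← Rat.num_div_den q, hd, hm]
    simp only [Set.mem_insert_iff, Set.mem_singleton_iff]
    rcases hcases with ⟨hd, hm⟩|⟨hd, hm⟩|⟨hd, hm⟩|⟨hd, hm⟩|⟨hd, hm⟩|⟨hd, hm⟩|⟨hd, hm⟩|⟨hd, hm⟩|⟨hd, hm⟩|⟨hd, hm⟩ <;>
      rw [hval _ _ hd hm] <;> norm_num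
  · intro hq s hs
    simp only [Set.mem_insert_iff, Set.mem_singleton_iff] at hq
    rcases hq with rfl|rfl|rfl|rfl|rfl|rfl|rfl|rfl|rfl|rfl
    · refine case_lemma (1/2) 6 (by norm_num) 3 (-2) 2 (-3) (by norm_num) (by norm_num)
        (by norm_num) (by norm_num) ?_ s (by norm_num at hs; exact_mod_cast hs)
      intro r hr0 hr1 hg
      interval_cases r <;> norm_num [Int.fract] at *
    · refine case_lemma (1/3) 6 (by norm_num) 2 (-1) 3 (-4) (by norm_num) (by norm_num)
        (by norm_num) (by norm_num) ?_ s (by norm_num at hs; exact_mod_cast hs)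
      intro r hr0 hr1 hg
      interval_cases r <;> norm_num [Int.fract] at *
    · refine case_lemma (2/3) 6 (by norm_num) 4 (-3) 1 (-2) (by norm_num) (by norm_num)
        (by norm_num) (by norm_num) ?_ s (by norm_num at hs; exact_mod_cast hs)
      intro r hr0 hr1 hg
      interval_cases r <;> norm_num [Int.fract] at *
    · refine case_lemma (1/4) 12 (by norm_num) 3 (-1) 7 (-9) (by norm_num) (by norm_num)
        (by norm_num) (by norm_num) ?_ s (by norm_num at hs; exact_mod_cast hs)
      intro r hr0 hr1 hg
      interval_cases r <;> norm_num [Int.fract] at *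
    · refine case_lemma (2/4) 6 (by norm_num) 3 (-2) 2 (-3) (by norm_num) (by norm_num)
        (by norm_num) (by norm_num) ?_ s (by norm_num at hs; exact_mod_cast hs)
      intro r hr0 hr1 hg
      interval_cases r <;> norm_num [Int.fract] at *
    · refine case_lemma (3/4) 12 (by norm_num) 9 (-7) 1 (-3) (by norm_num) (by norm_num)
        (by norm_num) (by norm_num) ?_ s (by norm_num at hs; exact_mod_cast hs)
      intro r hr0 hr1 hg
      interval_cases r <;> norm_num [Int.fract] at *
    · refine case_lemma (1/5) 30 (by norm_num) 6 (-1) 19 (-24) (by norm_num) (by norm_num)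
        (by norm_num) (by norm_num) ?_ s (by norm_num at hs; exact_mod_cast hs)
      intro r hr0 hr1 hg
      interval_cases r <;> norm_num [Int.fract] at *
    · refine case_lemma (2/5) 30 (by norm_num) 12 (-7) 13 (-18) (by norm_num) (by norm_num)
        (by norm_num) (by norm_num) ?_ s (by norm_num at hs; exact_mod_cast hs)
      intro r hr0 hr1 hg
      interval_cases r <;> norm_num [Int.fract] at *
    · refine case_lemma (3/5) 30 (by norm_num) 18 (-13) 7 (-12) (by norm_num) (by norm_num)
        (by norm_num) (by norm_num) ?_ s (by norm_num at hs; exact_mod_cast hs)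
      intro r hr0 hr1 hg
      interval_cases r <;> norm_num [Int.fract] at *
    · refine case_lemma (4/5) 30 (by norm_num) 24 (-19) 1 (-6) (by norm_num) (by norm_num)
        (by norm_num) (by norm_num) ?_ s (by norm_num at hs; exact_mod_cast hs)
      intro r hr0 hr1 hg
      interval_cases r <;> norm_num [Int.fract] at *
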